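/- Let C ⊆ ℝⁿ be a nonempty compact convex set. Then every x ∈ C can be written as a convex combination of at most ℓ_C extreme points of C, where ℓ_C is the length of the longest chain of nonempty faces of C. -/

import Mathlib

/-- The dimension of a set: the linear dimension of its affine hull. -/
noncomputable def setDim {E : Type*} [AddCommGroup E] [Module ℝ E] (S : Set E) : ℕ :=
  Module.finrank ℝ (vectorSpan ℝ S)

/-- `F` is a face of the convex set `S`: a convex subset such that whenever a point of the
open segment between `x, y ∈ S` lies in `F`, both endpoints lie in `F`. -/
def IsFaceOf {E : Type*} [AddCommGroup E] [Module ℝ E] (S F : Set E) : Prop :=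
  F ⊆ S ∧ Convex ℝ F ∧ ∀ ⦃x⦄, x ∈ S → ∀ ⦃y⦄, y ∈ S → ∀ ⦃a : ℝ⦄, 0 < a → a < 1 →
    a • x + (1 - a) • y ∈ F → x ∈ F ∧ y ∈ F

/-- An extreme ray of `K` is a one-dimensional face. -/
def IsExtremeRay {E : Type*} [AddCommGroup E] [Module ℝ E] (K R : Set E) : Prop :=
  IsFaceOf K R ∧ setDim R = 1

/-- `x` is a sum of at most `k` elements, each belonging to an extreme ray of `K`. -/
def IsSumOfExtremeRayElems {E : Type*} [AddCommGroup E] [Module ℝ E]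
    (K : Set E) (k : ℕ) (x : E) : Prop :=
  ∃ m : ℕ, m ≤ k ∧ ∃ f : Fin m → E,
    (∀ i, ∃ R : Set E, IsExtremeRay K R ∧ f i ∈ R) ∧ x = ∑ i, f i

/-- There is a chain of `l` nonempty faces of `S`, each properly containing the next. -/
def HasFaceChainOfLength {E : Type*} [AddCommGroup E] [Module ℝ E] (S : Set E) (l : ℕ) : Prop :=
  ∃ c : Fin l → Set E, StrictAnti c ∧ ∀ i, IsFaceOf S (c i) ∧ (c i).Nonempty

/-- `l` is the length of the longest chain of nonempty faces of `S`. -/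
def IsLongestFaceChainLength {E : Type*} [AddCommGroup E] [Module ℝ E] (S : Set E) (l : ℕ) : Prop :=
  HasFaceChainOfLength S l ∧ ∀ m, HasFaceChainOfLength S m → m ≤ l

section CaratheodoryAux

open Set

variable {n : ℕ}

local notation "E'" => EuclideanSpace ℝ (Fin n)

private lemma isFaceOf_self' {C : Set E'} (h : Convex ℝ C) : IsFaceOf C C :=
  ⟨subset_rfl, h, fun x hx y hy _ _ _ _ => ⟨hx, hy⟩⟩

private lemma isFaceOf_trans' {C F G : Set E'} (hF : IsFaceOf C F) (hG : IsFaceOf F G) :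
    IsFaceOf C G := by
  refine ⟨hG.1.trans hF.1, hG.2.1, fun x hx y hy a ha0 ha1 hm => ?_⟩
  obtain ⟨hxF, hyF⟩ := hF.2.2 hx hy ha0 ha1 (hG.1 hm)
  exact hG.2.2 hxF hyF ha0 ha1 hm

private lemma extremePoints_subset_of_face {C F : Set E'} (hF : IsFaceOf C F) :
    F.extremePoints ℝ ⊆ C.extremePoints ℝ := by
  rintro x ⟨hxF, hx⟩
  refine ⟨hF.1 hxF, fun y hy z hz hseg => ?_⟩
  obtain ⟨a, b, ha, hb, hab, habx⟩ := hseg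
  have hb' : b = 1 - a := by linarith
  have hmem : a • y + (1 - a) • z ∈ F := by rw [← hb']; rwa [habx]
  obtain ⟨hyF, hzF⟩ := hF.2.2 hy hz ha (by linarith) hmem
  exact hx hyF hzF ⟨a, b, ha, hb, hab, habx⟩

/-- shrink: moving less far along a direction stays inside a convex set. -/
private lemma shrink_dir {C : Set E'} (hC : Convex ℝ C) {q v : E'} (hq : q ∈ C)
    {r t : ℝ} (hr : 0 < r) (hrt : r ≤ t) (h : q + t • v ∈ C) : q + r • v ∈ C := by
  have ht : 0 < t := hr.trans_le hrt
  have h1 : q + r • v = (r/t) • (q + t • v) + (1 - r/t) • q := by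
    match_scalars <;> field_simp <;> ring
  rw [h1]
  exact hC h hq (by positivity)
    (by have : r / t ≤ 1 := (div_le_one ht).mpr hrt; linarith) (by ring)

private lemma add_dir {C : Set E'} (hC : Convex ℝ C) {q v₁ v₂ : E'} {t₁ t₂ : ℝ}
    (h₁ : 0 < t₁) (h₂ : 0 < t₂) (m₁ : q + t₁ • v₁ ∈ C) (m₂ : q + t₂ • v₂ ∈ C) :
    ∃ t : ℝ, 0 < t ∧ q + t • (v₁ + v₂) ∈ C := by
  refine ⟨(t₁⁻¹ + t₂⁻¹)⁻¹, by positivity, ?_⟩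
  have key : q + (t₁⁻¹ + t₂⁻¹)⁻¹ • (v₁ + v₂)
      = ((t₁⁻¹ + t₂⁻¹)⁻¹ / t₁) • (q + t₁ • v₁) + ((t₁⁻¹ + t₂⁻¹)⁻¹ / t₂) • (q + t₂ • v₂) := by
    match_scalars <;> field_simp <;> ring
  rw [key]
  refine hC m₁ m₂ (by positivity) (by positivity) ?_
  field_simp

/-- the submodule of two-sided admissible directions at `q ∈ C`. -/
private def dirSubmodule (C : Set E') (hC : Convex ℝ C) (q : E') (hq : q ∈ C) :
    Submodule ℝ E' where
  carrier := {v | ∃ t : ℝ, 0 < t ∧ q + t • v ∈ C ∧ q + t • (-v) ∈ C}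
  zero_mem' := ⟨1, one_pos, by simpa using hq, by simpa using hq⟩
  add_mem' := by
    rintro v₁ v₂ ⟨t₁, ht₁, m₁, m₁'⟩ ⟨t₂, ht₂, m₂, m₂'⟩
    obtain ⟨t, ht, hm⟩ := add_dir hC ht₁ ht₂ m₁ m₂
    obtain ⟨s, hs, hm'⟩ := add_dir hC ht₁ ht₂ m₁' m₂'
    have hm'' : q + s • (-(v₁ + v₂)) ∈ C := by rwa [neg_add]
    exact ⟨min t s, lt_min ht hs,
      shrink_dir hC hq (lt_min ht hs) (min_le_left _ _) hm,
      shrink_dir hC hq (lt_min ht hs) (min_le_right _ _) hm''⟩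
  smul_mem' := by
    rintro c v ⟨t, ht, m, m'⟩
    rcases lt_trichotomy c 0 with hc | rfl | hc
    · have hc' : c ≠ 0 := ne_of_lt hc
      obtain ⟨r, hr, hrc⟩ : ∃ r : ℝ, 0 < r ∧ r * c = -t :=
        ⟨-(t / c), neg_pos.mpr (div_neg_of_pos_of_neg ht hc), by
          rw [neg_mul, div_mul_cancel₀ _ hc']⟩
      refine ⟨r, hr, ?_, ?_⟩
      · have h1 : q + r • (c • v) = q + t • (-v) := by
          match_scalars <;> (try ring) <;> linear_combination hrc
        rwa [h1]
      · have h1 : q + r • (-(c • v)) = q + t • v := by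
          match_scalars <;> (try ring) <;> linear_combination (-1 : ℝ) * hrc
        rwa [h1]
    · exact ⟨1, one_pos, by simpa using hq, by simpa using hq⟩
    · have hc' : c ≠ 0 := ne_of_gt hc
      obtain ⟨r, hr, hrc⟩ : ∃ r : ℝ, 0 < r ∧ r * c = t :=
        ⟨t / c, div_pos ht hc, div_mul_cancel₀ _ hc'⟩
      refine ⟨r, hr, ?_, ?_⟩
      · have h1 : q + r • (c • v) = q + t • v := by
          match_scalars <;> (try ring) <;> linear_combination hrc
        rwa [h1]
      · have h1 : q + r • (-(c • v)) = q + t • (-v) := by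
          match_scalars <;> (try ring) <;> linear_combination (-1 : ℝ) * hrc
        rwa [h1]

private def minFace (C : Set E') (hC : Convex ℝ C) (q : E') (hq : q ∈ C) : Set E' :=
  C ∩ {y | y - q ∈ dirSubmodule C hC q hq}

private lemma minFace_subset {C : Set E'} (hC : Convex ℝ C) {q : E'} (hq : q ∈ C) :
    minFace C hC q hq ⊆ C := inter_subset_left

private lemma mem_minFace_self {C : Set E'} (hC : Convex ℝ C) {q : E'} (hq : q ∈ C) :
    q ∈ minFace C hC q hq := ⟨hq, by simp [Submodule.zero_mem]⟩

private lemma minFace_convex {C : Set E'} (hC : Convex ℝ C) {q : E'} (hq : q ∈ C) :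
    Convex ℝ (minFace C hC q hq) := by
  refine hC.inter ?_
  intro y₁ h₁ y₂ h₂ a b ha hb hab
  simp only [mem_setOf_eq] at *
  have heq : a • y₁ + b • y₂ - q = a • (y₁ - q) + b • (y₂ - q) := by
    calc a • y₁ + b • y₂ - q = a • y₁ + b • y₂ - (a + b) • q := by rw [hab, one_smul]
      _ = a • (y₁ - q) + b • (y₂ - q) := by rw [smul_sub, smul_sub, add_smul]; abel
  rw [heq]
  exact (dirSubmodule C hC q hq).add_mem ((dirSubmodule C hC q hq).smul_mem a h₁)
    ((dirSubmodule C hC q hq).smul_mem b h₂)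

/-- key computation: if the point beyond `q` opposite `a•u + (1-a)•v` is in `C`,
then a point beyond `q` opposite `u` is in `C`. -/
private lemma face_key {C : Set E'} (hC : Convex ℝ C) {q u v : E'} {a s : ℝ}
    (ha0 : 0 < a) (ha1 : a < 1) (hs : 0 < s) (hv : v ∈ C)
    (hz : q + s • (-(a • u + (1 - a) • v - q)) ∈ C) :
    ∃ r : ℝ, 0 < r ∧ q + r • (-(u - q)) ∈ C := by
  have hd : (0:ℝ) < 1 + s * (1 - a) := by nlinarith
  obtain ⟨μ, hμpos, hμc⟩ : ∃ μ : ℝ, 0 < μ ∧ μ * (1 + s * (1 - a)) = 1 :=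
    ⟨(1 + s * (1 - a))⁻¹, by positivity, inv_mul_cancel₀ hd.ne'⟩
  refine ⟨μ * s * a, by positivity, ?_⟩
  have key : q + (μ * s * a) • (-(u - q))
      = μ • (q + s • (-(a • u + (1 - a) • v - q))) + (1 - μ) • v := by
    match_scalars <;> (try ring) <;> (try linear_combination (-1 : ℝ) * hμc) <;>
      linear_combination hμc
  rw [key]
  refine hC hz hv (le_of_lt hμpos) ?_ (by ring)
  nlinarith [hμc, mul_pos hs (sub_pos.mpr ha1), hμpos]

private lemma minFace_isFaceOf {C : Set E'} (hC : Convex ℝ C) {q : E'} (hq : q ∈ C) :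
    IsFaceOf C (minFace C hC q hq) := by
  refine ⟨minFace_subset hC hq, minFace_convex hC hq, ?_⟩
  intro u hu v hv a ha0 ha1 hw
  obtain ⟨hwC, s, hs, _, hbwd⟩ := hw
  have keyu : ∃ r : ℝ, 0 < r ∧ q + r • (-(u - q)) ∈ C := face_key hC ha0 ha1 hs hv hbwd
  have hswap : a • u + (1 - a) • v = (1 - a) • v + (1 - (1 - a)) • u := by
    rw [sub_sub_cancel]; exact add_comm _ _
  have keyv : ∃ r : ℝ, 0 < r ∧ q + r • (-(v - q)) ∈ C := by
    refine face_key (a := 1 - a) hC (by linarith) (by linarith) hs hu ?_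
    rwa [← hswap]
  constructor
  · obtain ⟨r, hr, hrm⟩ := keyu
    have hfwd : q + (1:ℝ) • (u - q) ∈ C := by simpa using hu
    exact ⟨hu, min 1 r, lt_min one_pos hr,
      shrink_dir hC hq (lt_min one_pos hr) (min_le_left _ _) hfwd,
      shrink_dir hC hq (lt_min one_pos hr) (min_le_right _ _) hrm⟩
  · obtain ⟨r, hr, hrm⟩ := keyv
    have hfwd : q + (1:ℝ) • (v - q) ∈ C := by simpa using hv
    exact ⟨hv, min 1 r, lt_min one_pos hr,
      shrink_dir hC hq (lt_min one_pos hr) (min_le_left _ _) hfwd,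
      shrink_dir hC hq (lt_min one_pos hr) (min_le_right _ _) hrm⟩

private lemma minFace_isClosed {C : Set E'} (hCcl : IsClosed C) (hC : Convex ℝ C)
    {q : E'} (hq : q ∈ C) : IsClosed (minFace C hC q hq) := by
  refine hCcl.inter ?_
  have h : {y : E' | y - q ∈ dirSubmodule C hC q hq}
      = (fun y => y - q) ⁻¹' (dirSubmodule C hC q hq : Set E') := rfl
  rw [h]
  exact (Submodule.closed_of_finiteDimensional _).preimage (continuous_id.sub continuous_const)

private lemma chain_bound_of_face {C F : Set E'} (hC : Convex ℝ C)
    (hF : IsFaceOf C F) (hprop : ¬ C ⊆ F) {l : ℕ}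
    (hbound : ∀ m, HasFaceChainOfLength C m → m ≤ l + 1) :
    ∀ m, HasFaceChainOfLength F m → m ≤ l := by
  intro m hm
  obtain ⟨c, hanti, hc⟩ := hm
  obtain ⟨p, hpC, hpF⟩ := not_subset.mp hprop
  have hFC : F ⊂ C := (ssubset_iff_of_subset hF.1).mpr ⟨p, hpC, hpF⟩
  have hchain : HasFaceChainOfLength C (m + 1) := by
    refine ⟨Fin.cons C c, ?_, ?_⟩
    · intro i j hij
      have hj0 : j ≠ 0 := (lt_of_le_of_lt (Fin.zero_le i) hij).ne'
      obtain ⟨k, rfl⟩ := Fin.eq_succ_of_ne_zero hj0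
      rw [Fin.cons_succ]
      rcases Fin.eq_zero_or_eq_succ i with rfl | ⟨k', rfl⟩
      · rw [Fin.cons_zero]
        exact lt_of_le_of_lt ((hc k).1.1 : c k ≤ F) hFC
      · rw [Fin.cons_succ]
        exact hanti (Fin.succ_lt_succ_iff.mp hij)
    · intro i
      rcases Fin.eq_zero_or_eq_succ i with rfl | ⟨k, rfl⟩
      · exact ⟨isFaceOf_self' hC, ⟨p, hpC⟩⟩
      · rw [Fin.cons_succ]
        exact ⟨isFaceOf_trans' hF (hc k).1, (hc k).2⟩
  have := hbound (m + 1) hchain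
  omega

private lemma main_induction :
    ∀ l : ℕ, ∀ C : Set E', C.Nonempty → IsCompact C → Convex ℝ C →
    (∀ m, HasFaceChainOfLength C m → m ≤ l) →
    ∀ x ∈ C, ∃ m : ℕ, m ≤ l ∧ ∃ (w : Fin m → ℝ) (p : Fin m → E'),
      (∀ i, 0 ≤ w i) ∧ (∑ i, w i) = 1 ∧
      (∀ i, p i ∈ Set.extremePoints ℝ C) ∧ x = ∑ i, w i • p i := by
  intro l
  induction l with
  | zero =>
    intro C hne hcomp hconv hbound x hx
    have h1 : HasFaceChainOfLength C 1 := by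
      refine ⟨fun _ => C, ?_, fun i => ⟨isFaceOf_self' hconv, hne⟩⟩
      intro i j hij
      exact absurd (Subsingleton.elim i j) hij.ne
    exact absurd (hbound 1 h1) (by norm_num)
  | succ l ih =>
    intro C hne hcomp hconv hbound x hx
    obtain ⟨p, hp⟩ := hcomp.extremePoints_nonempty hne
    by_cases hxp : x = p
    · refine ⟨1, by omega, fun _ => 1, fun _ => p, fun _ => zero_le_one, by simp,
        fun _ => hp, by simp [hxp]⟩
    · have hpC : p ∈ C := hp.1
      have hxpne : x - p ≠ 0 := sub_ne_zero.mpr hxp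
      set g : ℝ → E' := fun t => p + t • (x - p) with hg
      have hgcont : Continuous g := continuous_const.add (continuous_id.smul continuous_const)
      set T : Set ℝ := Set.Ici 1 ∩ g ⁻¹' C with hT
      have hTne : (1:ℝ) ∈ T := ⟨Set.self_mem_Ici, by simpa [hg] using hx⟩
      have hTclosed : IsClosed T := isClosed_Ici.inter (hcomp.isClosed.preimage hgcont)
      obtain ⟨R, hR⟩ := hcomp.isBounded.exists_norm_le
      have hTbdd : BddAbove T := by
        refine ⟨(R + ‖p‖) / ‖x - p‖, fun t ht => ?_⟩
        have h1 : ‖g t‖ ≤ R := hR _ ht.2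
        have h2 : ‖t • (x - p)‖ ≤ R + ‖p‖ := by
          have : t • (x - p) = g t - p := by simp [hg]
          rw [this]
          calc ‖g t - p‖ ≤ ‖g t‖ + ‖p‖ := norm_sub_le _ _
            _ ≤ R + ‖p‖ := by linarith
        rw [norm_smul] at h2
        have hxpos : 0 < ‖x - p‖ := norm_pos_iff.mpr hxpne
        rw [le_div_iff₀ hxpos]
        have h4 : t ≤ |t| := le_abs_self t
        have h5 : ‖t‖ = |t| := Real.norm_eq_abs t
        rw [h5] at h2
        nlinarith [abs_nonneg t]
      set b : ℝ := sSup T with hb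
      have hbT : b ∈ T := hTclosed.csSup_mem ⟨1, hTne⟩ hTbdd
      have hb1 : 1 ≤ b := hbT.1
      have hb0 : 0 < b := lt_of_lt_of_le one_pos hb1
      set q : E' := g b with hq
      have hqC : q ∈ C := hbT.2
      set F : Set E' := minFace C hconv q hqC with hF
      have hFface : IsFaceOf C F := minFace_isFaceOf hconv hqC
      have hpnotF : p ∉ F := by
        rintro ⟨-, t, ht, -, hbwd⟩
        -- hbwd : q + t • (-(p - q)) ∈ C
        have hqp : -(p - q) = b • (x - p) := by simp [hq, hg]
        have hmem : g (b * (1 + t)) ∈ C := by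
          have : g (b * (1 + t)) = q + t • (-(p - q)) := by
            rw [hqp, hq]
            simp only [hg]
            match_scalars <;> ring
          rwa [this]
        have hin : b * (1 + t) ∈ T := ⟨Set.mem_Ici.mpr (by nlinarith), hmem⟩
        have hle : b * (1 + t) ≤ b := le_csSup hTbdd hin
        nlinarith
      have hprop : ¬ C ⊆ F := fun h => hpnotF (h hpC)
      have hFcompact : IsCompact F :=
        hcomp.of_isClosed_subset (minFace_isClosed hcomp.isClosed hconv hqC) hFface.1
      have hFne : F.Nonempty := ⟨q, mem_minFace_self hconv hqC⟩
      have hFbound : ∀ m, HasFaceChainOfLength F m → m ≤ l :=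
        chain_bound_of_face hconv hFface hprop hbound
      obtain ⟨m, hm, w, pts, hw0, hw1, hext, hqeq⟩ :=
        ih F hFne hFcompact hFface.2.1 hFbound q (mem_minFace_self hconv hqC)
      obtain ⟨β, hβ0, hβ1, hβb⟩ : ∃ β : ℝ, 0 ≤ β ∧ β ≤ 1 ∧ β * b = 1 := by
        refine ⟨b⁻¹, by positivity, ?_, inv_mul_cancel₀ hb0.ne'⟩
        have h1 : b⁻¹ * b = 1 := inv_mul_cancel₀ hb0.ne'
        have h2 : (0:ℝ) < b⁻¹ := by positivity
        nlinarith
      refine ⟨m + 1, by omega, Fin.cons (1 - β) (fun i => β * w i),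
        Fin.cons p pts, ?_, ?_, ?_, ?_⟩
      · intro i
        rcases Fin.eq_zero_or_eq_succ i with rfl | ⟨k, rfl⟩
        · rw [Fin.cons_zero]; linarith
        · rw [Fin.cons_succ]
          exact mul_nonneg hβ0 (hw0 k)
      · rw [Fin.sum_univ_succ]
        simp only [Fin.cons_zero, Fin.cons_succ]
        rw [← Finset.mul_sum, hw1]
        ring
      · intro i
        rcases Fin.eq_zero_or_eq_succ i with rfl | ⟨k, rfl⟩
        · rw [Fin.cons_zero]; exact hp
        · rw [Fin.cons_succ]
          exact extremePoints_subset_of_face hFface (hext k)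
      · rw [Fin.sum_univ_succ]
        simp only [Fin.cons_zero, Fin.cons_succ]
        have hsum : ∑ i : Fin m, (β * w i) • pts i = β • ∑ i : Fin m, w i • pts i := by
          rw [Finset.smul_sum]
          refine Finset.sum_congr rfl fun i _ => ?_
          rw [smul_smul]
        rw [hsum, ← hqeq, hq]
        simp only [hg]
        match_scalars <;> (try ring) <;> (try linear_combination hβb) <;>
          linear_combination (-1 : ℝ) * hβb
  termination_by l => l

end CaratheodoryAux

/-- For a nonempty compact convex set `C` whose longest chain of nonempty
faces has length `ℓ_C`, every `x ∈ C` is a convex combination of at most `ℓ_C` extreme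
points of `C`. -/
theorem caratheodory_stmt11 {n : ℕ} (C : Set (EuclideanSpace ℝ (Fin n)))
    (hCne : C.Nonempty) (hCcompact : IsCompact C) (hCconv : Convex ℝ C)
    (l : ℕ) (hl : IsLongestFaceChainLength C l) :
    ∀ x ∈ C, ∃ m : ℕ, m ≤ l ∧ ∃ (w : Fin m → ℝ) (p : Fin m → EuclideanSpace ℝ (Fin n)),
      (∀ i, 0 ≤ w i) ∧ (∑ i, w i) = 1 ∧
      (∀ i, p i ∈ Set.extremePoints ℝ C) ∧ x = ∑ i, w i • p i :=
  main_induction l C hCne hCcompact hCconv hl.2
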